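/- The function x ↦ √(2π)(1 - x²) e^{x²/2} Φ(x) - x is continuous and strictly decreasing on (0, ∞), and has a unique zero β in (0, ∞), where Φ is the standard normal CDF. -/

import Mathlib

open Real Set

/-- The standard normal cumulative distribution function. -/
noncomputable def Phi (x : ℝ) : ℝ :=
  (Real.sqrt (2 * Real.pi))⁻¹ * ∫ u in Set.Iic x, Real.exp (-u ^ 2 / 2)

/-- The function whose unique positive zero defines the constant β. -/
noncomputable def psi (x : ℝ) : ℝ :=
  Real.sqrt (2 * Real.pi) * (1 - x ^ 2) * Real.exp (x ^ 2 / 2) * Phi x - x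

open MeasureTheory intervalIntegral

lemma gauss_int : Integrable (fun u : ℝ => Real.exp (-u ^ 2 / 2)) := by
  have h := integrable_exp_neg_mul_sq (by norm_num : (0:ℝ) < 1/2)
  convert h using 2 with u
  ring_nf

lemma gauss_cont : Continuous (fun u : ℝ => Real.exp (-u ^ 2 / 2)) := by
  continuity

lemma integral_Iic_eq (x : ℝ) :
    (∫ u in Set.Iic x, Real.exp (-u ^ 2 / 2)) =
    (∫ u in Set.Iic (0:ℝ), Real.exp (-u ^ 2 / 2)) + ∫ u in (0:ℝ)..x, Real.exp (-u ^ 2 / 2) := by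
  have := integral_Iic_sub_Iic (gauss_int.integrableOn (s := Set.Iic (0:ℝ)))
    (gauss_int.integrableOn (s := Set.Iic x))
  linarith [this]

lemma Phi_hasDerivAt (x : ℝ) :
    HasDerivAt Phi ((Real.sqrt (2 * Real.pi))⁻¹ * Real.exp (-x ^ 2 / 2)) x := by
  have h : HasDerivAt (fun y => ∫ u in (0:ℝ)..y, Real.exp (-u ^ 2 / 2))
      (Real.exp (-x ^ 2 / 2)) x :=
    integral_hasDerivAt_right gauss_int.intervalIntegrable
      (gauss_cont.stronglyMeasurableAtFilter _ _) gauss_cont.continuousAt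
  have h2 : HasDerivAt (fun y => (∫ u in Set.Iic (0:ℝ), Real.exp (-u ^ 2 / 2))
      + ∫ u in (0:ℝ)..y, Real.exp (-u ^ 2 / 2)) (Real.exp (-x ^ 2 / 2)) x := by
    simpa using h
  have h3 := h2.const_mul (Real.sqrt (2 * Real.pi))⁻¹
  have : Phi = fun y => (Real.sqrt (2 * Real.pi))⁻¹ * ((∫ u in Set.Iic (0:ℝ), Real.exp (-u ^ 2 / 2))
      + ∫ u in (0:ℝ)..y, Real.exp (-u ^ 2 / 2)) := by
    funext y; rw [Phi, integral_Iic_eq]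
  rw [this]
  exact h3

lemma Phi_pos (x : ℝ) : 0 < Phi x := by
  rw [Phi]
  have hs : 0 < Real.sqrt (2 * Real.pi) := Real.sqrt_pos.2 (by positivity)
  refine mul_pos (inv_pos.2 hs) ?_
  have h1 : (0:ℝ) < ∫ u in (x-1)..x, Real.exp (-u ^ 2 / 2) :=
    intervalIntegral_pos_of_pos gauss_int.intervalIntegrable
      (fun u => Real.exp_pos _) (by linarith)
  have h2 : (∫ u in (x-1)..x, Real.exp (-u ^ 2 / 2)) ≤ ∫ u in Set.Iic x, Real.exp (-u ^ 2 / 2) := by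
    rw [intervalIntegral.integral_of_le (by linarith : x - 1 ≤ x)]
    apply setIntegral_mono_set gauss_int.integrableOn
    · exact Filter.Eventually.of_forall fun u => (Real.exp_pos _).le
    · exact HasSubset.Subset.eventuallyLE (fun u hu => hu.2)
  linarith

lemma Phi_continuous : Continuous Phi :=
  continuous_iff_continuousAt.2 fun x => (Phi_hasDerivAt x).continuousAt

lemma psi_continuous : Continuous psi := by
  unfold psi
  exact (((continuous_const.mul (continuous_const.sub (continuous_pow 2))).mul
    ((continuous_pow 2).div_const 2).rexp).mul Phi_continuous).sub continuous_id

lemma psi_hasDerivAt (x : ℝ) :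
    HasDerivAt psi
      (-(Real.sqrt (2 * Real.pi) * x * (1 + x ^ 2) * Real.exp (x ^ 2 / 2) * Phi x) - x ^ 2) x := by
  have hsq : HasDerivAt (fun y : ℝ => y ^ 2 / 2) x x := by
    have := ((hasDerivAt_pow 2 x).div_const 2)
    simpa using this
  have hexp : HasDerivAt (fun y : ℝ => Real.exp (y ^ 2 / 2)) (Real.exp (x ^ 2 / 2) * x) x :=
    (Real.hasDerivAt_exp _).comp x hsq
  have h1 : HasDerivAt (fun y : ℝ => Real.sqrt (2 * Real.pi) * (1 - y ^ 2))
      (Real.sqrt (2 * Real.pi) * (-(2 * x))) x := by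
    have : HasDerivAt (fun y : ℝ => 1 - y ^ 2) (-(2 * x)) x := by
      simpa using (hasDerivAt_pow 2 x).const_sub (1:ℝ)
    exact this.const_mul _
  have h2 := (h1.mul hexp).mul (Phi_hasDerivAt x)
  have h3 := h2.sub (hasDerivAt_id x)
  have heq : HasDerivAt psi
      ((Real.sqrt (2 * Real.pi) * -(2 * x) * Real.exp (x ^ 2 / 2) +
          Real.sqrt (2 * Real.pi) * (1 - x ^ 2) * (Real.exp (x ^ 2 / 2) * x)) * Phi x +
        Real.sqrt (2 * Real.pi) * (1 - x ^ 2) * Real.exp (x ^ 2 / 2) *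
          ((Real.sqrt (2 * Real.pi))⁻¹ * Real.exp (-x ^ 2 / 2)) - 1) x := by
    exact h3
  convert heq using 1
  have hs : Real.sqrt (2 * Real.pi) ≠ 0 := ne_of_gt (Real.sqrt_pos.2 (by positivity))
  have he : Real.exp (x ^ 2 / 2) * Real.exp (-x ^ 2 / 2) = 1 := by
    rw [← Real.exp_add]; ring_nf; exact Real.exp_zero
  have key : Real.sqrt (2 * Real.pi) * (1 - x ^ 2) * Real.exp (x ^ 2 / 2) *
      ((Real.sqrt (2 * Real.pi))⁻¹ * Real.exp (-x ^ 2 / 2)) = 1 - x ^ 2 := by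
    calc _ = (1 - x ^ 2) * (Real.sqrt (2 * Real.pi) * (Real.sqrt (2 * Real.pi))⁻¹) *
          (Real.exp (x ^ 2 / 2) * Real.exp (-x ^ 2 / 2)) := by ring
      _ = 1 - x ^ 2 := by rw [mul_inv_cancel₀ hs, he]; ring
  rw [key]
  ring

lemma psi_strictAnti : StrictAntiOn psi (Set.Ioi 0) := by
  apply strictAntiOn_of_deriv_neg (convex_Ioi 0) psi_continuous.continuousOn
  intro x hx
  rw [interior_Ioi] at hx
  rw [(psi_hasDerivAt x).deriv]
  have hΦ := Phi_pos x
  have hx0 : (0:ℝ) < x := hx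
  have : 0 < Real.sqrt (2 * Real.pi) * x * (1 + x ^ 2) * Real.exp (x ^ 2 / 2) * Phi x := by
    have hs : 0 < Real.sqrt (2 * Real.pi) := Real.sqrt_pos.2 (by positivity)
    positivity
  nlinarith [sq_nonneg x]

theorem stmt0 :
    ContinuousOn psi (Set.Ioi 0) ∧ StrictAntiOn psi (Set.Ioi 0) ∧
      ∃! b : ℝ, b ∈ Set.Ioi (0 : ℝ) ∧ psi b = 0 := by
  refine ⟨psi_continuous.continuousOn, psi_strictAnti, ?_⟩
  have hs : 0 < Real.sqrt (2 * Real.pi) := Real.sqrt_pos.2 (by positivity)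
  have h0 : 0 < psi 0 := by
    have : psi 0 = Real.sqrt (2 * Real.pi) * Phi 0 := by simp [psi]
    rw [this]
    exact mul_pos hs (Phi_pos 0)
  have h1 : psi 1 = -1 := by norm_num [psi]
  have hiv := intermediate_value_Ioo' (by norm_num : (0:ℝ) ≤ 1) psi_continuous.continuousOn
  have hmem : (0:ℝ) ∈ Set.Ioo (psi 1) (psi 0) := ⟨by rw [h1]; norm_num, h0⟩
  obtain ⟨b, hb, hpsib⟩ := hiv hmem
  refine ⟨b, ⟨hb.1, hpsib⟩, fun y hy => ?_⟩
  exact psi_strictAnti.injOn hy.1 hb.1 (by rw [hy.2, hpsib])
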